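/- Suppose l_1 + c ≥ k and fix I = {u_1 < ⋯ < u_a} ⊆ {1,…,k}. Among all subsets J ⊆ {1,…,k} with |J| = a + c =: b such that (I,J) is l_1-admissible, there is a unique minimal element with respect to the ordering J ≥ J' ⟺ κ(J) ≥ κ(J') componentwise, and it is J_min = {min(u_i, k−b+i) : 1 ≤ i ≤ a} ⊔ [k−c+1, k]. -/

import Mathlib

/-- `κ(I)_α = #{i ∈ I : i ≤ α}`. -/
def kappa (I : Finset ℕ) (α : ℕ) : ℤ := ((I.filter (fun i => i ≤ α)).card : ℤ)

/-- The `i`-th (0-based) smallest element of a finset of naturals, default `0`. -/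
def sortedNth (S : Finset ℕ) (i : ℕ) : ℕ := (S.sort (· ≤ ·)).getD i 0

/-- `J_min = {min(u_i, k−b+i)}_{1≤i≤a} ⊔ [k−c+1, k]`. -/
def Jmin (k a c : ℕ) (u : Fin a → ℕ) : Finset ℕ :=
  (Finset.image (fun i : Fin a => min (u i) (k - (a + c) + ((i : ℕ) + 1))) Finset.univ) ∪
    Finset.Icc (k - c + 1) k

lemma sortedNth_lt (S : Finset ℕ) {i j : ℕ} (hij : i < j) (hj : j < S.card) :
    sortedNth S i < sortedNth S j := by
  have hlen : (S.sort (· ≤ ·)).length = S.card := Finset.length_sort _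
  have hs : (S.sort (· ≤ ·)).Pairwise (· < ·) := (Finset.sortedLT_sort S).pairwise
  have hi' : i < (S.sort (· ≤ ·)).length := by omega
  have hj' : j < (S.sort (· ≤ ·)).length := by omega
  simp only [sortedNth, List.getD_eq_getElem _ _ hi', List.getD_eq_getElem _ _ hj']
  exact hs.rel_get_of_lt (a := ⟨i, hi'⟩) (b := ⟨j, hj'⟩) (by simpa using hij)

lemma sortedNth_mem (S : Finset ℕ) {i : ℕ} (hi : i < S.card) : sortedNth S i ∈ S := by
  have hi' : i < (S.sort (· ≤ ·)).length := by rw [Finset.length_sort]; exact hi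
  rw [sortedNth, List.getD_eq_getElem _ _ hi']
  exact (Finset.mem_sort _).1 (List.getElem_mem hi')

lemma exists_sortedNth (S : Finset ℕ) {x : ℕ} (hx : x ∈ S) :
    ∃ i, i < S.card ∧ sortedNth S i = x := by
  have hx' : x ∈ S.sort (· ≤ ·) := (Finset.mem_sort _).2 hx
  obtain ⟨n, hn, he⟩ := List.mem_iff_getElem.1 hx'
  refine ⟨n, by rwa [Finset.length_sort] at hn, ?_⟩
  rw [sortedNth, List.getD_eq_getElem _ _ hn, he]

lemma sortedNth_add_le (S : Finset ℕ) (i d : ℕ) (h : i + d < S.card) :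
    sortedNth S i + d ≤ sortedNth S (i + d) := by
  induction d with
  | zero => simp
  | succ d ih =>
    have h1 : i + d < S.card := by omega
    have h2 := sortedNth_lt S (show i + d < i + (d + 1) by omega) h
    have h3 := ih h1
    omega

lemma kappa_eq (S : Finset ℕ) (α : ℕ) :
    kappa S α = (((Finset.range S.card).filter (fun i => sortedNth S i ≤ α)).card : ℤ) := by
  unfold kappa
  congr 1
  refine (Finset.card_bij (fun i _ => sortedNth S i) ?_ ?_ ?_).symm
  · intro i hi
    simp only [Finset.mem_filter, Finset.mem_range] at hi ⊢
    exact ⟨sortedNth_mem S hi.1, hi.2⟩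
  · intro i hi j hj he
    simp only [Finset.mem_filter, Finset.mem_range] at hi hj
    by_contra hne
    rcases Nat.lt_or_ge i j with h | h
    · exact absurd he (Nat.ne_of_lt (sortedNth_lt S h hj.1))
    · have : j < i := by omega
      exact absurd he.symm (Nat.ne_of_lt (sortedNth_lt S this hi.1))
  · intro x hx
    simp only [Finset.mem_filter] at hx
    obtain ⟨i, hi, he⟩ := exists_sortedNth S hx.1
    exact ⟨i, by simp [Finset.mem_filter, Finset.mem_range, hi, he, hx.2], he⟩

lemma kappa_mono {J J' : Finset ℕ} (hc : J.card = J'.card)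
    (h : ∀ i, i < J.card → sortedNth J' i ≤ sortedNth J i) (α : ℕ) :
    kappa J α ≤ kappa J' α := by
  rw [kappa_eq, kappa_eq, ← hc]
  have hsub : (Finset.range J.card).filter (fun i => sortedNth J i ≤ α) ⊆
      (Finset.range J.card).filter (fun i => sortedNth J' i ≤ α) := by
    intro i hi
    simp only [Finset.mem_filter, Finset.mem_range] at hi ⊢
    exact ⟨hi.1, le_trans (h i hi.1) hi.2⟩
  exact_mod_cast Finset.card_le_card hsub

lemma sortedNth_bound {J : Finset ℕ} {k : ℕ} (hJ : J ⊆ Finset.Icc 1 k) {i : ℕ}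
    (hi : i < J.card) : sortedNth J i + (J.card - 1 - i) ≤ k := by
  have h1 := sortedNth_add_le J i (J.card - 1 - i) (by omega)
  have h2 : sortedNth J (i + (J.card - 1 - i)) ∈ J := sortedNth_mem J (by omega)
  have h3 := (Finset.mem_Icc.1 (hJ h2)).2
  omega

/-- the sorting function for `Jmin`. -/
def fmin (k a c : ℕ) (u : Fin a → ℕ) (i : ℕ) : ℕ :=
  if h : i < a then min (u ⟨i, h⟩) (k - (a + c) + (i + 1)) else k - (a + c) + (i + 1)

lemma fmin_strictMono {k a c : ℕ} {u : Fin a → ℕ} (hu : StrictMono u) :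
    StrictMono (fmin k a c u) := by
  intro i j hij
  unfold fmin
  rcases Nat.lt_or_ge j a with hja | hja
  · have hia : i < a := lt_trans hij hja
    rw [dif_pos hia, dif_pos hja]
    have h1 : u ⟨i, hia⟩ < u ⟨j, hja⟩ := hu (by simpa using hij)
    have h2 : k - (a + c) + (i + 1) < k - (a + c) + (j + 1) := by omega
    exact lt_min (lt_of_le_of_lt (min_le_left _ _) h1)
      (lt_of_le_of_lt (min_le_right _ _) h2)
  · have hj' : ¬ j < a := by omega
    rw [dif_neg hj']
    rcases Nat.lt_or_ge i a with hia | hia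
    · rw [dif_pos hia]
      exact lt_of_le_of_lt (min_le_right _ _) (by omega)
    · have hi' : ¬ i < a := by omega
      rw [dif_neg hi']
      omega

lemma sort_range_image (n : ℕ) (g : ℕ → ℕ) (hg : StrictMono g) :
    ((Finset.range n).image g).sort (· ≤ ·) = (List.range n).map g := by
  apply List.Perm.eq_of_pairwise' (Finset.pairwise_sort _ _)
  · -- sortedness of the mapped list
    rw [List.pairwise_map]
    exact (List.pairwise_lt_range (n := n)).imp (fun h => (hg h).le)
  · -- the permutation
    have hval : ((Finset.range n).image g).val = ((List.range n).map g : Multiset ℕ) := by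
      rw [Finset.image_val_of_injOn (hg.injective.injOn), Finset.range_val]
      rfl
    have : (((Finset.range n).image g).sort (· ≤ ·) : Multiset ℕ) =
        ((List.range n).map g : Multiset ℕ) := by
      rw [← hval]; exact Multiset.sort_eq _ _
    exact Multiset.coe_eq_coe.1 this

lemma sortedNth_range_image (n : ℕ) (g : ℕ → ℕ) (hg : StrictMono g) {i : ℕ} (hi : i < n) :
    sortedNth ((Finset.range n).image g) i = g i := by
  rw [sortedNth, sort_range_image n g hg]
  have hlen : i < ((List.range n).map g).length := by simpa using hi
  rw [List.getD_eq_getElem _ _ hlen]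
  simp

lemma Jmin_eq (k a c : ℕ) (u : Fin a → ℕ) (hbk : a + c ≤ k) :
    Jmin k a c u = (Finset.range (a + c)).image (fmin k a c u) := by
  ext x
  simp only [Jmin, Finset.mem_union, Finset.mem_image, Finset.mem_univ, true_and,
    Finset.mem_Icc, Finset.mem_range, fmin]
  constructor
  · rintro (⟨i, rfl⟩ | ⟨h1, h2⟩)
    · exact ⟨i, by omega, by rw [dif_pos i.isLt]⟩
    · refine ⟨x - (k - (a + c)) - 1, by omega, ?_⟩
      rw [dif_neg (by omega)]
      omega
  · rintro ⟨i, hi, rfl⟩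
    by_cases hia : i < a
    · exact Or.inl ⟨⟨i, hia⟩, by rw [dif_pos hia]⟩
    · rw [dif_neg hia]
      exact Or.inr ⟨by omega, by omega⟩

lemma kappa_succ (J : Finset ℕ) (m : ℕ) :
    kappa J (m + 1) = kappa J m + (if m + 1 ∈ J then 1 else 0) := by
  unfold kappa
  have hsplit : J.filter (fun i => i ≤ m + 1) =
      J.filter (fun i => i ≤ m) ∪ J.filter (fun i => i = m + 1) := by
    rw [← Finset.filter_or]
    apply Finset.filter_congr
    intro x _
    constructor <;> intro h <;> omega
  have hdisj : Disjoint (J.filter (fun i => i ≤ m)) (J.filter (fun i => i = m + 1)) := by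
    rw [Finset.disjoint_left]
    intro x hx hy
    simp only [Finset.mem_filter] at hx hy
    omega
  rw [hsplit, Finset.card_union_of_disjoint hdisj, Finset.filter_eq']
  split <;> simp

lemma eq_of_kappa_eq {J J' : Finset ℕ} (hJ : 0 ∉ J) (hJ' : 0 ∉ J')
    (h : ∀ α, kappa J α = kappa J' α) : J = J' := by
  ext n
  cases n with
  | zero => simp [hJ, hJ']
  | succ m =>
    have h1 := h (m + 1)
    have h2 := h m
    have e1 := kappa_succ J m
    have e2 := kappa_succ J' m
    constructor <;> intro hm
    · by_contra hm'
      rw [if_pos hm] at e1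
      rw [if_neg hm'] at e2
      omega
    · by_contra hm'
      rw [if_neg hm'] at e1
      rw [if_pos hm] at e2
      omega

/-- suppose `l₁ + c ≥ k` and fix `I = {u_1 < ⋯ < u_a} ⊆ {1,…,k}`.
Among subsets `J ⊆ {1,…,k}` of cardinality `b = a+c` such that `(I,J)` is
`l₁`-admissible (here: the `i`-th smallest element of `J` is `≤ u_i` for `i ≤ a`),
the set `J_min` is the unique minimal element for the order `J ≥ J' ⟺ κ(J) ≥ κ(J')`
componentwise. -/
theorem stmt12 (k a c l1 : ℕ) (hl1 : l1 ≤ k) (hlc : k ≤ l1 + c) (hbk : a + c ≤ k)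
    (u : Fin a → ℕ) (hu : StrictMono u) (hur : ∀ i, u i ∈ Finset.Icc 1 k) :
    (Jmin k a c u ⊆ Finset.Icc 1 k ∧ (Jmin k a c u).card = a + c ∧
      (∀ i : Fin a, sortedNth (Jmin k a c u) i ≤ u i)) ∧
    (∀ J : Finset ℕ, J ⊆ Finset.Icc 1 k → J.card = a + c →
      (∀ i : Fin a, sortedNth J i ≤ u i) →
      ∀ α, kappa (Jmin k a c u) α ≤ kappa J α) ∧
    (∀ J : Finset ℕ, J ⊆ Finset.Icc 1 k → J.card = a + c →
      (∀ i : Fin a, sortedNth J i ≤ u i) →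
      (∀ J' : Finset ℕ, J' ⊆ Finset.Icc 1 k → J'.card = a + c →
        (∀ i : Fin a, sortedNth J' i ≤ u i) → ∀ α, kappa J α ≤ kappa J' α) →
      J = Jmin k a c u) := by
  have hsm := fmin_strictMono (k := k) (c := c) hu
  have heq := Jmin_eq k a c u hbk
  -- basic facts about fmin values
  have hf_mem : ∀ i, i < a + c → fmin k a c u i ∈ Finset.Icc 1 k := by
    intro i hi
    rw [Finset.mem_Icc]
    unfold fmin
    split
    · next h =>
      have := Finset.mem_Icc.1 (hur ⟨i, h⟩)
      constructor
      · exact le_min this.1 (by omega)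
      · exact le_trans (min_le_left _ _) this.2
    · omega
  -- subset
  have hsub : Jmin k a c u ⊆ Finset.Icc 1 k := by
    rw [heq]
    intro x hx
    simp only [Finset.mem_image, Finset.mem_range] at hx
    obtain ⟨i, hi, rfl⟩ := hx
    exact hf_mem i hi
  -- card
  have hcard : (Jmin k a c u).card = a + c := by
    rw [heq, Finset.card_image_of_injective _ hsm.injective, Finset.card_range]
  -- sortedNth of Jmin
  have hnth : ∀ i, i < a + c → sortedNth (Jmin k a c u) i = fmin k a c u i := by
    intro i hi
    rw [heq]
    exact sortedNth_range_image _ _ hsm hi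
  -- admissibility of Jmin
  have hadm : ∀ i : Fin a, sortedNth (Jmin k a c u) i ≤ u i := by
    intro i
    rw [hnth i (by omega)]
    unfold fmin
    rw [dif_pos i.isLt]
    exact le_trans (min_le_left _ _) (by rfl)
  -- minimality
  have hmin : ∀ J : Finset ℕ, J ⊆ Finset.Icc 1 k → J.card = a + c →
      (∀ i : Fin a, sortedNth J i ≤ u i) →
      ∀ α, kappa (Jmin k a c u) α ≤ kappa J α := by
    intro J hJsub hJcard hJadm α
    apply kappa_mono (by rw [hcard, hJcard])
    intro i hi
    rw [hcard] at hi
    rw [hnth i hi]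
    have hb := sortedNth_bound hJsub (i := i) (by omega)
    rw [hJcard] at hb
    unfold fmin
    split
    · next h =>
      exact le_min (hJadm ⟨i, h⟩) (by omega)
    · omega
  refine ⟨⟨hsub, hcard, hadm⟩, hmin, ?_⟩
  intro J hJsub hJcard hJadm hJmin
  have h0J : (0 : ℕ) ∉ J := fun h => by simpa using Finset.mem_Icc.1 (hJsub h)
  have h0M : (0 : ℕ) ∉ Jmin k a c u := fun h => by simpa using Finset.mem_Icc.1 (hsub h)
  apply eq_of_kappa_eq h0J h0M
  intro α
  exact le_antisymm (hJmin (Jmin k a c u) hsub hcard hadm α) (hmin J hJsub hJcard hJadm α)
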